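/- Let J be a continuous Jacobian on Ω and let μ₁ be a suitable Borel probability on Ω with continuous IRN J₁. Then μ₃ := L*_{log J}(μ₁) is a suitable Borel probability with continuous IRN J₃ given by J₃(z) = J₁(σ(z))·J(z)/J(σ(z)) for all z ∈ Ω. Moreover, if J and J₁ are Hölder continuous then J₃ is Hölder continuous. -/

import Mathlib

open MeasureTheory

/-- The one-sided shift space `Ω = {1,…,d}^ℕ` on `d` symbols,
with the product topology and product σ-algebra. -/
abbrev Omega (d : ℕ) : Type := ℕ → Fin d

/-- The left shift `σ(x₁,x₂,x₃,…) = (x₂,x₃,…)`. -/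
def shift {d : ℕ} (x : Omega d) : Omega d := fun n => x (n + 1)

/-- Prepend a symbol: `cons a x = ax = (a,x₁,x₂,…)`. -/
def cons {d : ℕ} (a : Fin d) (x : Omega d) : Omega d := fun n =>
  match n with
  | 0 => a
  | Nat.succ k => x k

/-- Hölder continuity with respect to the metric
`d(x,y) = 2^{-min{ j : x_j ≠ y_j}}` on `Ω`: there are `C` and `α > 0` such that
whenever `x` and `y` agree on their first `n` coordinates (so `d(x,y) ≤ 2⁻ⁿ`),
`|f x - f y| ≤ C * (2⁻ⁿ)^α`. -/
def IsHolder {d : ℕ} (f : Omega d → ℝ) : Prop :=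
  Continuous f ∧ ∃ C α : ℝ, 0 < α ∧ ∀ (x y : Omega d) (n : ℕ),
    (∀ k < n, x k = y k) → |f x - f y| ≤ C * ((2 : ℝ)⁻¹ ^ n) ^ α

/-- `μ` is a suitable probability with IRN (inverse Radon–Nikodym derivative
along injective branches) `J`: the function `J` is continuous and strictly
positive, and for every symbol `j` and continuous `φ`,
`∫ φ(jx) J(jx) dμ(x) = ∫_{[j]} φ dμ` where `[j] = {x | x₁ = j}`. -/
structure IsSuitable {d : ℕ} (μ : Measure (Omega d)) (J : Omega d → ℝ) : Prop where
  cont : Continuous J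
  pos : ∀ x, 0 < J x
  irn : ∀ (j : Fin d) (φ : Omega d → ℝ), Continuous φ →
    ∫ x, φ (cons j x) * J (cons j x) ∂μ = ∫ x in {x : Omega d | x 0 = j}, φ x ∂μ

/-- `J` is a Jacobian: continuous, strictly positive, and `Σ_a J(ax) = 1`. -/
def IsJacobian {d : ℕ} (J : Omega d → ℝ) : Prop :=
  Continuous J ∧ (∀ x, 0 < J x) ∧ ∀ x : Omega d, ∑ a : Fin d, J (cons a x) = 1

/-- `ν = L*_{log J}(μ)`, the image of `μ` under the dual of the Ruelle operator
of the potential `log J` (note `e^{log J(ax)} = J(ax)`): for every continuous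
`φ`, `∫ φ dν = ∫ L_{log J}φ dμ = ∫ Σ_a J(ax) φ(ax) dμ(x)`. -/
def IsDualRuelle {d : ℕ} (J : Omega d → ℝ) (μ ν : Measure (Omega d)) : Prop :=
  ∀ φ : Omega d → ℝ, Continuous φ →
    ∫ x, φ x ∂ν = ∫ x, ∑ a : Fin d, J (cons a x) * φ (cons a x) ∂μ

/-- `μ` is σ-invariant: `∫ φ∘σ dμ = ∫ φ dμ` for all continuous `φ`. -/
def IsShiftInvariant {d : ℕ} (μ : Measure (Omega d)) : Prop :=
  ∀ φ : Omega d → ℝ, Continuous φ → ∫ x, φ (shift x) ∂μ = ∫ x, φ x ∂μ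

/-- KL divergence `D_KL(μ₁,μ₂) = ∫ (log J₁ − log J₂) dμ₁` of suitable
probabilities, expressed via their IRNs `J₁`, `J₂`. -/
noncomputable def Dkl {d : ℕ} (μ₁ : Measure (Omega d)) (J₁ J₂ : Omega d → ℝ) : ℝ :=
  ∫ x, (Real.log (J₁ x) - Real.log (J₂ x)) ∂μ₁


variable {d : ℕ}

lemma shift_cons (a : Fin d) (x : Omega d) : shift (cons a x) = x := rfl

lemma cons_zero (a : Fin d) (x : Omega d) : cons a x 0 = a := rfl

lemma continuous_shift : Continuous (shift : Omega d → Omega d) :=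
  continuous_pi fun n => continuous_apply (n + 1)

lemma continuous_cons (a : Fin d) : Continuous (cons a : Omega d → Omega d) :=
  continuous_pi fun n => by
    cases n with
    | zero => exact continuous_const
    | succ k => exact continuous_apply k

lemma holder_C_nonneg {f : Omega d → ℝ} {C α : ℝ}
    (H : ∀ (x y : Omega d) (n : ℕ), (∀ k < n, x k = y k) →
      |f x - f y| ≤ C * ((2 : ℝ)⁻¹ ^ n) ^ α)
    (x : Omega d) : 0 ≤ C := by
  have := H x x 0 (by intro k hk; omega)
  simpa using this

lemma IsHolder.comp_shift {f : Omega d → ℝ} (hf : IsHolder f) :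
    IsHolder (fun x => f (shift x)) := by
  obtain ⟨hc, C, α, hα, H⟩ := hf
  refine ⟨hc.comp continuous_shift, C * (2 : ℝ) ^ α, α, hα, ?_⟩
  intro x y n hxy
  have hC : 0 ≤ C := holder_C_nonneg H x
  have h2 : (1 : ℝ) ≤ (2 : ℝ) ^ α := Real.one_le_rpow one_le_two hα.le
  cases n with
  | zero =>
      have := H (shift x) (shift y) 0 (by intro k hk; omega)
      simp only [pow_zero, Real.one_rpow, mul_one] at this ⊢
      exact this.trans (le_mul_of_one_le_right hC h2)
  | succ m =>
      have hxy' : ∀ k < m, shift x k = shift y k := fun k hk => hxy (k + 1) (by omega)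
      have h := H (shift x) (shift y) m hxy'
      have key : C * ((2 : ℝ)⁻¹ ^ m) ^ α = C * (2 : ℝ) ^ α * ((2 : ℝ)⁻¹ ^ (m + 1)) ^ α := by
        rw [pow_succ, Real.mul_rpow (by positivity) (by norm_num),
          Real.inv_rpow (by norm_num : (0:ℝ) ≤ 2)]
        have h2pos : (0 : ℝ) < (2 : ℝ) ^ α := Real.rpow_pos_of_pos two_pos α
        field_simp
      exact h.trans (le_of_eq key)

lemma IsHolder.bounded {f : Omega d → ℝ} (hf : IsHolder f) (x₀ : Omega d) :
    ∃ M, ∀ x, |f x| ≤ M := by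
  obtain ⟨_, C, α, hα, H⟩ := hf
  refine ⟨|f x₀| + C, fun x => ?_⟩
  have h := H x x₀ 0 (by intro k hk; omega)
  simp only [pow_zero, Real.one_rpow, mul_one] at h
  have : |f x| ≤ |f x - f x₀| + |f x₀| := by
    have := abs_add_le (f x - f x₀) (f x₀); simpa using this
  linarith

lemma IsHolder.mul' {f g : Omega d → ℝ} (hf : IsHolder f) (hg : IsHolder g)
    {Mf Mg : ℝ} (hMf : ∀ x, |f x| ≤ Mf) (hMg : ∀ x, |g x| ≤ Mg) :
    IsHolder (fun x => f x * g x) := by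
  obtain ⟨hfc, C₁, α₁, hα₁, H₁⟩ := hf
  obtain ⟨hgc, C₂, α₂, hα₂, H₂⟩ := hg
  refine ⟨hfc.mul hgc, Mf * C₂ + Mg * C₁, min α₁ α₂, lt_min hα₁ hα₂, ?_⟩
  intro x y n hxy
  set r : ℝ := (2 : ℝ)⁻¹ ^ n with hr
  have hr0 : 0 < r := by positivity
  have hr1 : r ≤ 1 := pow_le_one₀ (by norm_num) (by norm_num)
  have e1 : r ^ α₁ ≤ r ^ min α₁ α₂ :=
    Real.rpow_le_rpow_of_exponent_ge hr0 hr1 (min_le_left _ _)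
  have e2 : r ^ α₂ ≤ r ^ min α₁ α₂ :=
    Real.rpow_le_rpow_of_exponent_ge hr0 hr1 (min_le_right _ _)
  have hC₁ : 0 ≤ C₁ := holder_C_nonneg H₁ x
  have hC₂ : 0 ≤ C₂ := holder_C_nonneg H₂ x
  have hMf0 : 0 ≤ Mf := (abs_nonneg _).trans (hMf x)
  have hMg0 : 0 ≤ Mg := (abs_nonneg _).trans (hMg x)
  have key : f x * g x - f y * g y = f x * (g x - g y) + g y * (f x - f y) := by ring
  calc |f x * g x - f y * g y|
      ≤ |f x * (g x - g y)| + |g y * (f x - f y)| := by rw [key]; exact abs_add_le _ _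
    _ = |f x| * |g x - g y| + |g y| * |f x - f y| := by rw [abs_mul, abs_mul]
    _ ≤ Mf * (C₂ * r ^ α₂) + Mg * (C₁ * r ^ α₁) := by
        have t1 : |f x| * |g x - g y| ≤ Mf * (C₂ * r ^ α₂) :=
          mul_le_mul (hMf x) (H₂ x y n hxy) (abs_nonneg _) hMf0
        have t2 : |g y| * |f x - f y| ≤ Mg * (C₁ * r ^ α₁) :=
          mul_le_mul (hMg y) (H₁ x y n hxy) (abs_nonneg _) hMg0
        linarith
    _ ≤ Mf * (C₂ * r ^ min α₁ α₂) + Mg * (C₁ * r ^ min α₁ α₂) := by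
        gcongr
    _ = (Mf * C₂ + Mg * C₁) * r ^ min α₁ α₂ := by ring

lemma IsHolder.inv' {f : Omega d → ℝ} (hf : IsHolder f) {m : ℝ} (hm : 0 < m)
    (hmf : ∀ x, m ≤ f x) : IsHolder (fun x => (f x)⁻¹) := by
  obtain ⟨hfc, C, α, hα, H⟩ := hf
  have hfpos : ∀ x, 0 < f x := fun x => lt_of_lt_of_le hm (hmf x)
  refine ⟨hfc.inv₀ (fun x => (hfpos x).ne'), C / (m * m), α, hα, ?_⟩
  intro x y n hxy
  set r : ℝ := (2 : ℝ)⁻¹ ^ n with hr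
  have hC : 0 ≤ C := holder_C_nonneg H x
  have hrα : (0:ℝ) ≤ r ^ α := Real.rpow_nonneg (by positivity) α
  have hax : f x ≠ 0 := (hfpos x).ne'
  have hay : f y ≠ 0 := (hfpos y).ne'
  have h1 : (f x)⁻¹ - (f y)⁻¹ = (f y - f x) / (f x * f y) := by
    field_simp
  rw [h1, abs_div, abs_sub_comm]
  have hprod : m * m ≤ |f x * f y| := by
    rw [abs_mul, abs_of_pos (hfpos x), abs_of_pos (hfpos y)]
    exact mul_le_mul (hmf x) (hmf y) hm.le (hfpos x).le
  calc |f x - f y| / |f x * f y| ≤ (C * r ^ α) / (m * m) :=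
        div_le_div₀ (by positivity) (H x y n hxy) (by positivity) hprod
    _ = C / (m * m) * r ^ α := by ring

lemma pos_lower_bound {f : Omega d → ℝ} (hc : Continuous f) (hp : ∀ x, 0 < f x)
    (x₀ : Omega d) : ∃ m > 0, ∀ x, m ≤ f x := by
  obtain ⟨z, -, hz⟩ := isCompact_univ.exists_isMinOn ⟨x₀, Set.mem_univ x₀⟩ hc.continuousOn
  exact ⟨f z, hp z, fun x => hz (Set.mem_univ x)⟩

lemma measurable_cyl (j : Fin d) : MeasurableSet {x : Omega d | x 0 = j} := by
  have h : Measurable (fun x : Omega d => x 0) := measurable_pi_apply 0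
  exact h (measurableSet_singleton j)

lemma integrable_cont {μ : Measure (Omega d)} [IsFiniteMeasure μ] {f : Omega d → ℝ}
    (hf : Continuous f) : Integrable f μ :=
  hf.integrable_of_hasCompactSupport (HasCompactSupport.of_compactSpace f)

lemma integral_eq_sum_cylinders (μ : Measure (Omega d)) [IsFiniteMeasure μ]
    {f : Omega d → ℝ} (hf : Continuous f) :
    ∫ x, f x ∂μ = ∑ j : Fin d, ∫ x in {x : Omega d | x 0 = j}, f x ∂μ := by
  have hint : Integrable f μ := integrable_cont hf
  have h1 : ∀ j : Fin d, ∫ x in {x : Omega d | x 0 = j}, f x ∂μ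
      = ∫ x, ({x : Omega d | x 0 = j}).indicator f x ∂μ := fun j =>
    (integral_indicator (measurable_cyl j)).symm
  simp_rw [h1]
  rw [← integral_finset_sum _ (fun j _ => hint.indicator (measurable_cyl j))]
  congr 1
  funext x
  have h2 : ∀ j : Fin d, ({y : Omega d | y 0 = j}).indicator f x
      = if x 0 = j then f x else 0 := fun j => by
    simp [Set.indicator_apply, Set.mem_setOf_eq]
  simp_rw [h2]
  rw [Finset.sum_ite_eq Finset.univ (x 0) (fun _ => f x)]
  simp


/-- if `J` is a continuous Jacobian and `μ₁` is suitable with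
continuous IRN `J₁`, then `μ₃ = L*_{log J}(μ₁)` is suitable with continuous
IRN `J₃(z) = J₁(σz)·J(z)/J(σz)`; moreover if `J` and `J₁` are Hölder then so
is `J₃`. -/
theorem dual_ruelle_suitable
    (d : ℕ) (hd : 2 ≤ d) (J J₁ J₃ : Omega d → ℝ)
    (μ₁ μ₃ : Measure (Omega d))
    [IsProbabilityMeasure μ₁] [IsProbabilityMeasure μ₃]
    (hJ : IsJacobian J) (h₁ : IsSuitable μ₁ J₁)
    (hμ₃ : IsDualRuelle J μ₁ μ₃)
    (hJ₃ : ∀ z, J₃ z = J₁ (shift z) * J z / J (shift z)) :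
    IsSuitable μ₃ J₃ ∧ (IsHolder J → IsHolder J₁ → IsHolder J₃) := by
  obtain ⟨hJc, hJp, hJsum⟩ := hJ
  have hJ₃c : Continuous J₃ := by
    have : J₃ = fun z => J₁ (shift z) * J z / J (shift z) := funext hJ₃
    rw [this]
    exact ((h₁.cont.comp continuous_shift).mul hJc).div
      (hJc.comp continuous_shift) (fun z => (hJp _).ne')
  have hJ₃p : ∀ z, 0 < J₃ z := fun z => by
    rw [hJ₃ z]; exact div_pos (mul_pos (h₁.pos _) (hJp _)) (hJp _)
  constructor
  · refine ⟨hJ₃c, hJ₃p, ?_⟩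
    intro j φ hφ
    set χ : Omega d → ℝ := fun y => φ (cons j y) * J (cons j y) with hχ
    have hχc : Continuous χ := (hφ.comp (continuous_cons j)).mul (hJc.comp (continuous_cons j))
    have hψc : Continuous (fun x : Omega d => φ (cons j x) * J₃ (cons j x)) :=
      (hφ.comp (continuous_cons j)).mul (hJ₃c.comp (continuous_cons j))
    have hindc : Continuous (fun y : Omega d => if y 0 = j then φ y else 0) := by
      refine Continuous.if ?_ hφ continuous_const
      intro a ha
      have h : IsClopen {x : Omega d | x 0 = j} :=
        (isClopen_discrete ({j} : Set (Fin d))).preimage (continuous_apply 0)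
      rw [h.frontier_eq] at ha
      exact absurd ha (Set.notMem_empty a)
    calc ∫ x, φ (cons j x) * J₃ (cons j x) ∂μ₃
        = ∫ x, ∑ a : Fin d, J (cons a x) *
            (φ (cons j (cons a x)) * J₃ (cons j (cons a x))) ∂μ₁ := hμ₃ _ hψc
      _ = ∫ x, ∑ a : Fin d, χ (cons a x) * J₁ (cons a x) ∂μ₁ := by
          apply integral_congr_ae
          filter_upwards with x
          refine Finset.sum_congr rfl fun a _ => ?_
          have h1 : shift (cons j (cons a x)) = cons a x := rfl
          rw [hJ₃ (cons j (cons a x)), h1]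
          have hne : J (cons a x) ≠ 0 := (hJp _).ne'
          simp only [hχ]
          field_simp
      _ = ∑ a : Fin d, ∫ x, χ (cons a x) * J₁ (cons a x) ∂μ₁ := by
          apply integral_finset_sum
          intro a _
          exact integrable_cont
            ((hχc.comp (continuous_cons a)).mul (h₁.cont.comp (continuous_cons a)))
      _ = ∑ a : Fin d, ∫ x in {x : Omega d | x 0 = a}, χ x ∂μ₁ :=
          Finset.sum_congr rfl fun a _ => h₁.irn a χ hχc
      _ = ∫ x, χ x ∂μ₁ := (integral_eq_sum_cylinders μ₁ hχc).symm
      _ = ∫ x, ∑ a : Fin d, J (cons a x) *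
            (if (cons a x) 0 = j then φ (cons a x) else 0) ∂μ₁ := by
          apply integral_congr_ae
          filter_upwards with x
          have h2 : ∀ a : Fin d, (cons a x) 0 = a := fun a => rfl
          simp only [h2, mul_ite, mul_zero, hχ]
          rw [Finset.sum_ite_eq' Finset.univ j (fun a => J (cons a x) * φ (cons a x))]
          simp [mul_comm]
      _ = ∫ x, (fun y : Omega d => if y 0 = j then φ y else 0) x ∂μ₃ := (hμ₃ _ hindc).symm
      _ = ∫ x in {x : Omega d | x 0 = j}, φ x ∂μ₃ := by
          rw [show (fun y : Omega d => if y 0 = j then φ y else 0)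
              = ({x : Omega d | x 0 = j}).indicator φ from
            funext fun y => by simp [Set.indicator_apply, Set.mem_setOf_eq]]
          exact integral_indicator (measurable_cyl j)
  · intro hJH h₁H
    have x₀ : Omega d := fun _ => ⟨0, by omega⟩
    obtain ⟨m, hm, hmJ⟩ := pos_lower_bound hJc hJp x₀
    have hJσ : IsHolder (fun x => J (shift x)) := hJH.comp_shift
    have hJ₁σ : IsHolder (fun x => J₁ (shift x)) := h₁H.comp_shift
    obtain ⟨M₁, hM₁⟩ := hJ₁σ.bounded x₀
    obtain ⟨M₂, hM₂⟩ := hJH.bounded x₀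
    have hmul : IsHolder (fun x => J₁ (shift x) * J x) := hJ₁σ.mul' hJH hM₁ hM₂
    have hinv : IsHolder (fun x => (J (shift x))⁻¹) := hJσ.inv' hm (fun x => hmJ (shift x))
    obtain ⟨M₃, hM₃⟩ := hmul.bounded x₀
    have hMinv : ∀ x : Omega d, |(J (shift x))⁻¹| ≤ m⁻¹ := fun x => by
      rw [abs_of_pos (inv_pos.2 (hJp _))]
      exact inv_anti₀ hm (hmJ _)
    have hfinal : IsHolder (fun x => (J₁ (shift x) * J x) * (J (shift x))⁻¹) :=
      hmul.mul' hinv hM₃ hMinv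
    have heq : J₃ = fun x => (J₁ (shift x) * J x) * (J (shift x))⁻¹ :=
      funext fun z => by rw [hJ₃ z, div_eq_mul_inv]
    rw [heq]
    exact hfinal
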